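/- If X, Y, XY are integrable and E[Y | σ(X)] = α + βX almost surely for constants α, β with β ≠ 0, then X is square integrable (i.e., X² is integrable). -/
import Mathlib


open MeasureTheory ProbabilityTheory

/-- If X, Y, XY are integrable and E[Y|σ(X)] = α + βX a.s. with β ≠ 0,
then X is square integrable. -/
theorem stmt_3 {Ω : Type*} [m : MeasurableSpace Ω] (μ : Measure Ω) [IsProbabilityMeasure μ]
    (X Y : Ω → ℝ) (hXm : Measurable X) (hYm : Measurable Y)
    (hX : Integrable X μ) (hY : Integrable Y μ)
    (hXY : Integrable (fun ω => X ω * Y ω) μ) (α β : ℝ)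
    (haff : μ[Y | MeasurableSpace.comap X inferInstance] =ᵐ[μ] fun ω => α + β * X ω)
    (hβ : β ≠ 0) :
    Integrable (fun ω => X ω ^ 2) μ := by
  set mX := MeasurableSpace.comap X inferInstance with hmX
  have hXsm : StronglyMeasurable[mX] X :=
    (Measurable.of_comap_le le_rfl).stronglyMeasurable
  have hpull : μ[X * Y | mX] =ᵐ[μ] X * μ[Y | mX] :=
    condExp_mul_of_stronglyMeasurable_left hXsm hXY hY
  have hInt : Integrable (fun ω => X ω * (α + β * X ω)) μ := by
    have := integrable_condExp (μ := μ) (m := mX) (f := X * Y)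
    refine this.congr ?_
    filter_upwards [hpull, haff] with ω h1 h2
    rw [h1, Pi.mul_apply, h2]
  have : Integrable (fun ω => β⁻¹ * (X ω * (α + β * X ω) - α * X ω)) μ :=
    ((hInt.sub (hX.const_mul α)).const_mul β⁻¹)
  refine this.congr (Filter.Eventually.of_forall fun ω => ?_)
  field_simp
  ring
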